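/- The function f : ℤ₊² → ℝ defined by f(x, y) = gcd(x, y) is positive definite; that is, for every finite nonempty set S ⊆ ℤ₊², the matrix indexed by S with entry at ((x₁, x₂), (y₁, y₂)) equal to gcd(gcd(x₁, y₁), gcd(x₂, y₂)) = gcd(x₁, x₂, y₁, y₂) is positive semidefinite. -/

import Mathlib

/-- A bivariate arithmetic function `f : ℤ₊² → ℝ` (positive integers encoded as positive
natural numbers) is *positive definite* if for every finite nonempty set `S ⊆ ℤ₊²` the
matrix with entries `f(gcd(x₁,y₁), gcd(x₂,y₂))` for `(x₁,x₂), (y₁,y₂) ∈ S` is positive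
semidefinite. -/
def IsPosDefArith2 (f : ℕ → ℕ → ℝ) : Prop :=
  ∀ S : Finset (ℕ × ℕ), S.Nonempty → (∀ p ∈ S, 0 < p.1 ∧ 0 < p.2) →
    (Matrix.of fun x y : S =>
      f (Nat.gcd x.1.1 y.1.1) (Nat.gcd x.1.2 y.1.2)).PosSemidef

/-- The function `f(x, y) = gcd(x, y)` on `ℤ₊²` is positive
definite. -/
theorem gcd_isPosDefArith2 :
    IsPosDefArith2 (fun x y => (Nat.gcd x y : ℝ)) := by
  intro S hS hpos
  classical
  set N := S.sup (fun p => p.1) + 1 with hN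
  have key : ∀ x y : S,
      ((Nat.gcd (Nat.gcd x.1.1 y.1.1) (Nat.gcd x.1.2 y.1.2) : ℕ) : ℝ)
        = ∑ d ∈ Finset.range N,
            (if d ∣ x.1.1 ∧ d ∣ x.1.2 then (1:ℝ) else 0)
          * (if d ∣ y.1.1 ∧ d ∣ y.1.2 then (1:ℝ) else 0)
          * (Nat.totient d : ℝ) := by
    intro x y
    set n := Nat.gcd (Nat.gcd x.1.1 y.1.1) (Nat.gcd x.1.2 y.1.2) with hn
    have hx1 : 0 < x.1.1 := (hpos x.1 x.2).1
    have hg1 : 0 < Nat.gcd x.1.1 y.1.1 := Nat.gcd_pos_of_pos_left _ hx1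
    have hnpos : 0 < n := Nat.gcd_pos_of_pos_left _ hg1
    have hle : n ≤ x.1.1 :=
      Nat.le_of_dvd hx1 ((Nat.gcd_dvd_left _ _).trans (Nat.gcd_dvd_left _ _))
    have hdivs : n.divisors = (Finset.range N).filter (· ∣ n) := by
      ext d
      simp only [Nat.mem_divisors, Finset.mem_filter, Finset.mem_range]
      constructor
      · rintro ⟨hd, -⟩
        refine ⟨?_, hd⟩
        have : d ≤ n := Nat.le_of_dvd hnpos hd
        have hx : x.1.1 ≤ S.sup (fun p => p.1) := Finset.le_sup x.2
        omega
      · rintro ⟨-, hd⟩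
        exact ⟨hd, hnpos.ne'⟩
    have hsum : (n : ℝ) = ∑ d ∈ Finset.range N, (if d ∣ n then (Nat.totient d : ℝ) else 0) := by
      rw [← Finset.sum_filter, ← hdivs]
      rw [← Nat.cast_sum]
      norm_cast
      exact (Nat.sum_totient n).symm
    rw [hsum]
    refine Finset.sum_congr rfl fun d _ => ?_
    have hiff : d ∣ n ↔ (d ∣ x.1.1 ∧ d ∣ x.1.2) ∧ (d ∣ y.1.1 ∧ d ∣ y.1.2) := by
      rw [hn, Nat.dvd_gcd_iff, Nat.dvd_gcd_iff, Nat.dvd_gcd_iff]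
      tauto
    simp only [hiff]
    split_ifs with h1 h2 h3 <;> simp_all
  rw [Matrix.posSemidef_iff_dotProduct_mulVec]
  constructor
  · ext x y
    simp [Matrix.conjTranspose_apply, Nat.gcd_comm]
  · intro u
    have hcalc : dotProduct (star u) ((Matrix.of fun x y : S =>
        ((Nat.gcd (Nat.gcd x.1.1 y.1.1) (Nat.gcd x.1.2 y.1.2) : ℕ) : ℝ)).mulVec u)
        = ∑ d ∈ Finset.range N, (Nat.totient d : ℝ) *
            (∑ x : S, (if d ∣ x.1.1 ∧ d ∣ x.1.2 then u x else 0))^2 := by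
      simp only [dotProduct, Matrix.mulVec, Matrix.of_apply, Pi.star_apply,
        star_trivial, dotProduct]
      calc ∑ x : S, u x * ∑ y : S, ((Nat.gcd (Nat.gcd x.1.1 y.1.1) (Nat.gcd x.1.2 y.1.2) : ℕ) : ℝ) * u y
          = ∑ x : S, ∑ y : S, ∑ d ∈ Finset.range N,
              (if d ∣ x.1.1 ∧ d ∣ x.1.2 then u x else 0) *
              (if d ∣ y.1.1 ∧ d ∣ y.1.2 then u y else 0) * (Nat.totient d : ℝ) := by
            refine Finset.sum_congr rfl fun x _ => ?_
            rw [Finset.mul_sum]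
            refine Finset.sum_congr rfl fun y _ => ?_
            rw [key x y, Finset.sum_mul, Finset.mul_sum]
            refine Finset.sum_congr rfl fun d _ => ?_
            split_ifs <;> ring
        _ = ∑ d ∈ Finset.range N, ∑ x : S, ∑ y : S,
              (if d ∣ x.1.1 ∧ d ∣ x.1.2 then u x else 0) *
              (if d ∣ y.1.1 ∧ d ∣ y.1.2 then u y else 0) * (Nat.totient d : ℝ) := by
            exact (Finset.sum_congr rfl fun x _ => Finset.sum_comm).trans Finset.sum_comm
        _ = ∑ d ∈ Finset.range N, (Nat.totient d : ℝ) *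
              (∑ x : S, (if d ∣ x.1.1 ∧ d ∣ x.1.2 then u x else 0))^2 := by
            refine Finset.sum_congr rfl fun d _ => ?_
            rw [sq, Finset.sum_mul_sum]
            rw [Finset.mul_sum]
            refine Finset.sum_congr rfl fun x _ => ?_
            rw [Finset.mul_sum]
            exact Finset.sum_congr rfl fun y _ => by ring
    rw [show (Matrix.of fun x y : S =>
        (fun a b => ((Nat.gcd a b : ℕ) : ℝ)) (Nat.gcd x.1.1 y.1.1) (Nat.gcd x.1.2 y.1.2)) =
        (Matrix.of fun x y : S =>
        ((Nat.gcd (Nat.gcd x.1.1 y.1.1) (Nat.gcd x.1.2 y.1.2) : ℕ) : ℝ)) from rfl]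
    rw [hcalc]
    exact Finset.sum_nonneg fun d _ => mul_nonneg (Nat.cast_nonneg _) (sq_nonneg _)
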